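/- Let k, l be positive integers and g(x,y) = x^{2k} y^{2k} / (x^{2kl} + y^{2kl})^{1/l} (with g(0,0)=0). Then every partial derivative of g of order at most k vanishes at (0,0). -/

import Mathlib

section Aux

variable {E : Type*} [NormedAddCommGroup E] [NormedSpace ℝ E]

/-- junk-robust: fderiv of a nonzero constant smul. -/
lemma my_fderiv_const_smul (F : ℝ × ℝ → E) (c : ℝ) (hc : c ≠ 0) (x : ℝ × ℝ) :
    fderiv ℝ (fun y => c • F y) x = c • fderiv ℝ F x := by
  by_cases h : DifferentiableAt ℝ F x
  · exact fderiv_const_smul h c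
  · have h' : ¬ DifferentiableAt ℝ (fun y => c • F y) x := by
      intro h'
      have := h'.const_smul c⁻¹
      simp only [Pi.smul_def, smul_smul, inv_mul_cancel₀ hc, one_smul] at this
      exact h this
    rw [fderiv_zero_of_not_differentiableAt h, fderiv_zero_of_not_differentiableAt h', smul_zero]

/-- junk-robust: fderiv of a composition with scaling. -/
lemma my_fderiv_comp_smul (F : ℝ × ℝ → E) (t : ℝ) (ht : t ≠ 0) (x : ℝ × ℝ) :
    fderiv ℝ (fun y => F (t • y)) x = t • fderiv ℝ F (t • x) := by
  by_cases h : DifferentiableAt ℝ F (t • x)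
  · have hinner : HasFDerivAt (fun y : ℝ × ℝ => t • y)
        (t • ContinuousLinearMap.id ℝ (ℝ × ℝ)) x := (hasFDerivAt_id x).const_smul t
    have := (h.hasFDerivAt.comp x hinner).fderiv
    rw [show (fun y => F (t • y)) = F ∘ (HSMul.hSMul t) from rfl, this]
    ext
    · simp [ContinuousLinearMap.map_smul]
    · simp [ContinuousLinearMap.map_smul]
  · have h' : ¬ DifferentiableAt ℝ (fun y => F (t • y)) x := by
      intro h'
      have h2 : DifferentiableAt ℝ (fun z : ℝ × ℝ => t⁻¹ • z) (t • x) :=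
        (differentiable_id.const_smul t⁻¹).differentiableAt
      have hx : t⁻¹ • t • x = x := by rw [smul_smul, inv_mul_cancel₀ ht, one_smul]
      have h3 := DifferentiableAt.comp (t • x) (hx ▸ h') h2
      have heq : (fun z : ℝ × ℝ => F (t • t⁻¹ • z)) = F := by
        funext z; rw [smul_smul, mul_inv_cancel₀ ht, one_smul]
      rw [Function.comp_def] at h3
      simp only [smul_smul, mul_inv_cancel₀ ht, one_smul] at h3
      exact h h3
    rw [fderiv_zero_of_not_differentiableAt h, fderiv_zero_of_not_differentiableAt h', smul_zero]

/-- junk-robust homogeneity of iterated derivatives. -/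
lemma my_iteratedFDeriv_homog (f : ℝ × ℝ → ℝ) (t : ℝ) (ht : t ≠ 0) (m : ℕ)
    (hf : ∀ x, f (t • x) = t ^ m • f x) :
    ∀ (j : ℕ) (x : ℝ × ℝ),
      iteratedFDeriv ℝ j f (t • x) = t ^ ((m : ℤ) - j) • iteratedFDeriv ℝ j f x := by
  intro j
  induction j with
  | zero =>
    intro x
    ext v
    simp only [iteratedFDeriv_zero_apply, ContinuousMultilinearMap.smul_apply, hf x,
      smul_eq_mul, Nat.cast_zero, sub_zero]
    norm_cast
  | succ j ih =>
    intro x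
    have key : fderiv ℝ (iteratedFDeriv ℝ j f) (t • x)
        = t ^ ((m : ℤ) - (j + 1)) • fderiv ℝ (iteratedFDeriv ℝ j f) x := by
      have h1 : fderiv ℝ (fun y => iteratedFDeriv ℝ j f (t • y)) x
          = t • fderiv ℝ (iteratedFDeriv ℝ j f) (t • x) :=
        my_fderiv_comp_smul _ t ht x
      have h2 : (fun y => iteratedFDeriv ℝ j f (t • y))
          = fun y => t ^ ((m : ℤ) - j) • iteratedFDeriv ℝ j f y := funext ih
      have h3 : fderiv ℝ (fun y => iteratedFDeriv ℝ j f (t • y)) x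
          = t ^ ((m : ℤ) - j) • fderiv ℝ (iteratedFDeriv ℝ j f) x := by
        rw [h2]
        exact my_fderiv_const_smul (iteratedFDeriv ℝ j f) _ (zpow_ne_zero _ ht) x
      have h4 : t • fderiv ℝ (iteratedFDeriv ℝ j f) (t • x)
          = t ^ ((m : ℤ) - j) • fderiv ℝ (iteratedFDeriv ℝ j f) x := by
        rw [← h1, h3]
      have h5 := congrArg (fun L => t⁻¹ • L) h4
      simp only [smul_smul, inv_mul_cancel₀ ht, one_smul] at h5
      rw [h5]
      congr 1
      rw [← zpow_neg_one, ← zpow_add₀ ht]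
      congr 1
      ring
    rw [iteratedFDeriv_succ_eq_comp_left]
    simp only [Function.comp_apply, key, map_smul]
    norm_cast

end Aux

theorem stmt_4 (k l : ℕ) (hk : 0 < k) (hl : 0 < l) :
    ∀ j : ℕ, j ≤ k →
      iteratedFDeriv ℝ j
        (fun q : ℝ × ℝ =>
          q.1 ^ (2 * k) * q.2 ^ (2 * k) /
            (q.1 ^ (2 * k * l) + q.2 ^ (2 * k * l)) ^ ((1 : ℝ) / l)) (0, 0) = 0 := by
  intro j hj
  set g : ℝ × ℝ → ℝ := fun q =>
    q.1 ^ (2 * k) * q.2 ^ (2 * k) /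
      (q.1 ^ (2 * k * l) + q.2 ^ (2 * k * l)) ^ ((1 : ℝ) / l) with hg
  have hl' : (l : ℝ) ≠ 0 := Nat.cast_ne_zero.mpr hl.ne'
  -- homogeneity of degree 2k for t = 2
  have hhom : ∀ q : ℝ × ℝ, g ((2 : ℝ) • q) = (2 : ℝ) ^ (2 * k) • g q := by
    intro q
    obtain ⟨x, y⟩ := q
    simp only [hg, Prod.smul_mk, smul_eq_mul]
    have hx : (0 : ℝ) ≤ x ^ (2 * k * l) := Even.pow_nonneg ⟨k * l, by ring⟩ x
    have hy : (0 : ℝ) ≤ y ^ (2 * k * l) := Even.pow_nonneg ⟨k * l, by ring⟩ y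
    have hden : ((2 * x) ^ (2 * k * l) + (2 * y) ^ (2 * k * l) : ℝ) ^ ((1 : ℝ) / l)
        = (2 : ℝ) ^ (2 * k) * (x ^ (2 * k * l) + y ^ (2 * k * l)) ^ ((1 : ℝ) / l) := by
      have : ((2 * x) ^ (2 * k * l) + (2 * y) ^ (2 * k * l) : ℝ)
          = 2 ^ (2 * k * l) * (x ^ (2 * k * l) + y ^ (2 * k * l)) := by ring
      rw [this, Real.mul_rpow (by positivity) (by positivity)]
      congr 1
      rw [pow_mul, ← Real.rpow_natCast ((2 : ℝ) ^ (2 * k)) l, ← Real.rpow_mul (by positivity)]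
      rw [mul_one_div, div_self hl', Real.rpow_one]
    rw [hden]
    rw [mul_pow, mul_pow]
    rcases eq_or_ne ((x ^ (2 * k * l) + y ^ (2 * k * l) : ℝ) ^ ((1 : ℝ) / l)) 0 with h0 | h0
    · rw [h0, mul_zero, div_zero, div_zero, mul_zero]
    · field_simp
  have key := my_iteratedFDeriv_homog g 2 two_ne_zero (2 * k) hhom j 0
  rw [smul_zero] at key
  have hzero : ((0, 0) : ℝ × ℝ) = (0 : ℝ × ℝ) := rfl
  rw [hzero]
  have hlt : (j : ℤ) < (2 * k : ℕ) := by
    push_cast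
    omega
  have hne : (2 : ℝ) ^ (((2 * k : ℕ) : ℤ) - j) ≠ 1 := by
    apply ne_of_gt
    apply one_lt_zpow₀ one_lt_two
    omega
  have := key
  -- D = c • D with c ≠ 1 implies D = 0
  set D := iteratedFDeriv ℝ j g 0 with hD
  have : D = (2 : ℝ) ^ (((2 * k : ℕ) : ℤ) - j) • D := key
  have h2 : (1 - (2 : ℝ) ^ (((2 * k : ℕ) : ℤ) - j)) • D = 0 := by
    rw [sub_smul, one_smul, ← this, sub_self]
  rcases smul_eq_zero.mp h2 with h | h
  · exact absurd (by linarith [sub_eq_zero.mp h]) hne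
  · exact h
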